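/- (Lidskii–Wielandt inequalities) For n×n Hermitian matrices A, B and C = A + B, for every subset I ⊆ {1,…,n} of cardinality r < n, one has ∑_{i∈I} γ_i ≤ ∑_{i∈I} α_i + ∑_{i=1}^r β_i, where α, β, γ are the decreasingly ordered eigenvalues of A, B, C. -/

import Mathlib

open Matrix BigOperators

/-- `α` is the list of eigenvalues of the Hermitian matrix `A`
in weakly decreasing order (with multiplicity). -/
def IsEigSeq {n : ℕ} (A : Matrix (Fin n) (Fin n) ℂ) (hA : A.IsHermitian)
    (α : Fin n → ℝ) : Prop :=
  Antitone α ∧ ∃ σ : Equiv.Perm (Fin n), ∀ i, α i = hA.eigenvalues (σ i)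

section LWAux

open Finset
open scoped InnerProductSpace ComplexOrder

variable {n : ℕ}

private lemma lw_herm_re_dot {M : Matrix (Fin n) (Fin n) ℂ} (hM : M.IsHermitian)
    (x : EuclideanSpace ℂ (Fin n)) :
    RCLike.re (star (WithLp.equiv 2 _ x) ⬝ᵥ (M *ᵥ WithLp.equiv 2 _ x)) =
      ∑ j, hM.eigenvalues j * ‖⟪hM.eigenvectorBasis j, x⟫_ℂ‖ ^ 2 := by
  have h1 : (star (WithLp.equiv 2 _ x) ⬝ᵥ (M *ᵥ WithLp.equiv 2 _ x))
      = ⟪x, (WithLp.equiv 2 _).symm (M *ᵥ WithLp.equiv 2 _ x)⟫_ℂ := by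
    rw [EuclideanSpace.inner_eq_star_dotProduct]
    simp
    exact dotProduct_comm _ _
  have h2 : ∀ j, ⟪hM.eigenvectorBasis j,
      (WithLp.equiv 2 _).symm (M *ᵥ WithLp.equiv 2 _ x)⟫_ℂ
      = (hM.eigenvalues j : ℂ) * ⟪hM.eigenvectorBasis j, x⟫_ℂ := by
    intro j
    have e1 : hM.eigenvectorBasis j
        = (WithLp.equiv 2 _).symm (⇑(hM.eigenvectorBasis j)) := rfl
    rw [EuclideanSpace.inner_eq_star_dotProduct, dotProduct_comm]
    erw [dotProduct_mulVec]
    have e2 : star ⇑(hM.eigenvectorBasis j) ᵥ* M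
        = star (Mᴴ *ᵥ ⇑(hM.eigenvectorBasis j)) := by
      rw [star_mulVec, conjTranspose_conjTranspose]
    rw [e2, hM.eq, hM.mulVec_eigenvectorBasis, star_smul, smul_dotProduct]
    have e3 : star ⇑(hM.eigenvectorBasis j) ⬝ᵥ WithLp.equiv 2 _ x
        = ⟪hM.eigenvectorBasis j, x⟫_ℂ := by
      exact (dotProduct_comm _ _).trans (EuclideanSpace.inner_eq_star_dotProduct _ _).symm
    rw [e3]
    simp [smul_eq_mul, Complex.star_def, Complex.conj_ofReal]
  rw [h1, ← (hM.eigenvectorBasis).sum_inner_mul_inner x]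
  rw [map_sum]
  refine Finset.sum_congr rfl fun j _ => ?_
  rw [h2, ← inner_conj_symm x (hM.eigenvectorBasis j), ← mul_assoc, mul_comm
    (starRingEnd ℂ _) ((hM.eigenvalues j : ℂ)), mul_assoc, RCLike.conj_mul]
  simp [← Complex.ofReal_pow]

private lemma lw_parseval (b : OrthonormalBasis (Fin n) ℂ (EuclideanSpace ℂ (Fin n)))
    (x : EuclideanSpace ℂ (Fin n)) :
    ∑ j, ‖⟪b j, x⟫_ℂ‖ ^ 2 = ‖x‖ ^ 2 := by
  have h := b.sum_inner_mul_inner x x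
  have h2 : ∀ j, ⟪x, b j⟫_ℂ * ⟪b j, x⟫_ℂ = (‖⟪b j, x⟫_ℂ‖ ^ 2 : ℝ) := by
    intro j
    rw [← inner_conj_symm x (b j), RCLike.conj_mul]
    norm_cast
  simp_rw [h2, inner_self_eq_norm_sq_to_K] at h
  exact Complex.ofReal_injective (by push_cast; push_cast at h; exact h)

private lemma lw_coeff_eq_zero (b : OrthonormalBasis (Fin n) ℂ (EuclideanSpace ℂ (Fin n)))
    {S : Finset (Fin n)} {x : EuclideanSpace ℂ (Fin n)}
    (hx : x ∈ Submodule.span ℂ (b '' (S : Set (Fin n)))) {j : Fin n} (hj : j ∉ S) :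
    ⟪b j, x⟫_ℂ = 0 := by
  have hle : Submodule.span ℂ (b '' (S : Set (Fin n)))
      ≤ LinearMap.ker (innerSL ℂ (b j)).toLinearMap := by
    rw [Submodule.span_le]
    rintro _ ⟨k, hk, rfl⟩
    simp only [SetLike.mem_coe, LinearMap.mem_ker, ContinuousLinearMap.coe_coe, innerSL_apply_apply]
    exact b.orthonormal.2 (fun h => hj (h ▸ hk))
  simpa using hle hx

private lemma lw_rayleigh_ge {M : Matrix (Fin n) (Fin n) ℂ} (hM : M.IsHermitian)
    (S : Finset (Fin n)) (c : ℝ) (h : ∀ j ∈ S, c ≤ hM.eigenvalues j)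
    (x : EuclideanSpace ℂ (Fin n))
    (hx : x ∈ Submodule.span ℂ (hM.eigenvectorBasis '' (S : Set (Fin n)))) :
    c * ‖x‖ ^ 2 ≤ RCLike.re (star (WithLp.equiv 2 _ x) ⬝ᵥ (M *ᵥ WithLp.equiv 2 _ x)) := by
  have hz : ∀ j ∈ univ, j ∉ S → ‖⟪hM.eigenvectorBasis j, x⟫_ℂ‖ ^ 2 = 0 := by
    intro j _ hj; rw [lw_coeff_eq_zero hM.eigenvectorBasis hx hj]; simp
  rw [lw_herm_re_dot hM, ← lw_parseval hM.eigenvectorBasis x, Finset.mul_sum]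
  rw [← Finset.sum_subset (Finset.subset_univ S)
    (fun j h1 h2 => mul_eq_zero_of_right _ (hz j h1 h2))
    (f := fun j => hM.eigenvalues j * ‖⟪hM.eigenvectorBasis j, x⟫_ℂ‖ ^ 2)]
  rw [← Finset.sum_subset (Finset.subset_univ S)
    (fun j h1 h2 => mul_eq_zero_of_right _ (hz j h1 h2))
    (f := fun j => c * ‖⟪hM.eigenvectorBasis j, x⟫_ℂ‖ ^ 2)]
  exact Finset.sum_le_sum fun j hj =>
    mul_le_mul_of_nonneg_right (h j hj) (by positivity)

private lemma lw_rayleigh_le {M : Matrix (Fin n) (Fin n) ℂ} (hM : M.IsHermitian)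
    (S : Finset (Fin n)) (c : ℝ) (h : ∀ j ∈ S, hM.eigenvalues j ≤ c)
    (x : EuclideanSpace ℂ (Fin n))
    (hx : x ∈ Submodule.span ℂ (hM.eigenvectorBasis '' (S : Set (Fin n)))) :
    RCLike.re (star (WithLp.equiv 2 _ x) ⬝ᵥ (M *ᵥ WithLp.equiv 2 _ x)) ≤ c * ‖x‖ ^ 2 := by
  have hz : ∀ j ∈ univ, j ∉ S → ‖⟪hM.eigenvectorBasis j, x⟫_ℂ‖ ^ 2 = 0 := by
    intro j _ hj; rw [lw_coeff_eq_zero hM.eigenvectorBasis hx hj]; simp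
  rw [lw_herm_re_dot hM, ← lw_parseval hM.eigenvectorBasis x, Finset.mul_sum]
  rw [← Finset.sum_subset (Finset.subset_univ S)
    (fun j h1 h2 => mul_eq_zero_of_right _ (hz j h1 h2))
    (f := fun j => hM.eigenvalues j * ‖⟪hM.eigenvectorBasis j, x⟫_ℂ‖ ^ 2)]
  rw [← Finset.sum_subset (Finset.subset_univ S)
    (fun j h1 h2 => mul_eq_zero_of_right _ (hz j h1 h2))
    (f := fun j => c * ‖⟪hM.eigenvectorBasis j, x⟫_ℂ‖ ^ 2)]
  exact Finset.sum_le_sum fun j hj =>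
    mul_le_mul_of_nonneg_right (h j hj) (by positivity)

private lemma lw_finrank_span_onb (b : OrthonormalBasis (Fin n) ℂ (EuclideanSpace ℂ (Fin n)))
    (S : Finset (Fin n)) :
    Module.finrank ℂ (Submodule.span ℂ (b '' (S : Set (Fin n)))) = S.card := by
  have hinj : Function.Injective b := b.orthonormal.linearIndependent.injective
  have h1 : LinearIndependent ℂ ((↑) : (b '' (S : Set (Fin n))) → EuclideanSpace ℂ (Fin n)) := by
    exact LinearIndepOn.id_image (b.orthonormal.linearIndependent.linearIndepOn _)
  have : Fintype (b '' (S : Set (Fin n))) := (S.finite_toSet.image b).fintype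
  rw [finrank_span_set_eq_card h1]
  rw [Set.toFinset_card]
  rw [Set.card_image_of_injective _ hinj]
  simp

private lemma lw_exists_ne_zero_mem_inf {V W : Submodule ℂ (EuclideanSpace ℂ (Fin n))}
    (h : n < Module.finrank ℂ V + Module.finrank ℂ W) :
    ∃ x : EuclideanSpace ℂ (Fin n), x ≠ 0 ∧ x ∈ V ∧ x ∈ W := by
  have hsup : Module.finrank ℂ ↥(V ⊔ W) ≤ n := by
    simpa [finrank_euclideanSpace] using Submodule.finrank_le (V ⊔ W)
  have heq := Submodule.finrank_sup_add_finrank_inf_eq V W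
  have hpos : 0 < Module.finrank ℂ ↥(V ⊓ W) := by omega
  have : Nontrivial ↥(V ⊓ W) := Module.nontrivial_of_finrank_pos hpos
  obtain ⟨y, hy⟩ := exists_ne (0 : ↥(V ⊓ W))
  exact ⟨y, by simpa using hy, y.2.1, y.2.2⟩

private lemma lw_exists_isEigSeq (M : Matrix (Fin n) (Fin n) ℂ) (hM : M.IsHermitian) :
    ∃ ν, IsEigSeq M hM ν := by
  set σ : Equiv.Perm (Fin n) := Fin.revPerm.trans (Tuple.sort hM.eigenvalues)
  refine ⟨fun i => hM.eigenvalues (σ i), ?_, σ, fun _ => rfl⟩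
  intro i j hij
  exact Tuple.monotone_sort hM.eigenvalues (Fin.rev_le_rev.mpr hij)

private lemma lw_sum_eig_eq_trace {M : Matrix (Fin n) (Fin n) ℂ} (hM : M.IsHermitian) :
    (↑(∑ i, hM.eigenvalues i) : ℂ) = M.trace := by
  nth_rewrite 2 [hM.spectral_theorem]
  rw [Unitary.conjStarAlgAut_apply]
  rw [Matrix.trace_mul_cycle, (Matrix.mem_unitaryGroup_iff').mp
    (Matrix.IsHermitian.eigenvectorUnitary hM).2, one_mul, trace_diagonal]
  push_cast
  rfl

private lemma lw_conj_unitary_psd {U : Matrix (Fin n) (Fin n) ℂ} (f : Fin n → ℝ)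
    (hf : ∀ i, 0 ≤ f i) :
    (U * diagonal (fun k => (f k : ℂ)) * star U).PosSemidef := by
  have hd : Matrix.PosSemidef (diagonal (fun k => (f k : ℂ))) := by
    refine Matrix.PosSemidef.diagonal fun i => ?_
    simpa using Complex.zero_le_real.mpr (hf i)
  simpa [Matrix.star_eq_conjTranspose, mul_assoc] using hd.mul_mul_conjTranspose_same U

private lemma lw_pos_part_eq {B : Matrix (Fin n) (Fin n) ℂ} (hB : B.IsHermitian) (t : ℝ) :
    (↑(Matrix.IsHermitian.eigenvectorUnitary hB) : Matrix (Fin n) (Fin n) ℂ) *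
      diagonal (fun k => ((max (hB.eigenvalues k - t) 0 : ℝ) : ℂ)) *
      star (↑(Matrix.IsHermitian.eigenvectorUnitary hB) : Matrix (Fin n) (Fin n) ℂ)
      + (t : ℂ) • 1 - B
    = (↑(Matrix.IsHermitian.eigenvectorUnitary hB) : Matrix (Fin n) (Fin n) ℂ) *
      diagonal (fun k => ((max (hB.eigenvalues k - t) 0 - (hB.eigenvalues k - t) : ℝ) : ℂ)) *
      star (↑(Matrix.IsHermitian.eigenvectorUnitary hB) : Matrix (Fin n) (Fin n) ℂ) := by
  set U : Matrix (Fin n) (Fin n) ℂ :=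
    (↑(Matrix.IsHermitian.eigenvectorUnitary hB) : Matrix (Fin n) (Fin n) ℂ) with hUdef
  have hU : U * star U = 1 :=
    (Matrix.mem_unitaryGroup_iff).mp (Matrix.IsHermitian.eigenvectorUnitary hB).2
  have expand : U * (diagonal (fun k => ((max (hB.eigenvalues k - t) 0 : ℝ) : ℂ))
        + (t:ℂ) • 1 - diagonal (RCLike.ofReal ∘ hB.eigenvalues)) * star U
      = U * diagonal (fun k => ((max (hB.eigenvalues k - t) 0 : ℝ) : ℂ)) * star U
        + (t:ℂ) • 1 - B := by
    rw [Matrix.mul_sub, Matrix.mul_add, Matrix.sub_mul, Matrix.add_mul]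
    rw [show U * ((t:ℂ) • (1 : Matrix (Fin n) (Fin n) ℂ)) * star U = (t:ℂ) • (U * star U) by
      simp [Matrix.mul_smul, Matrix.smul_mul], hU]
    rw [← (show B = U * diagonal (RCLike.ofReal ∘ hB.eigenvalues) * star U from hB.spectral_theorem)]
  rw [← expand]
  congr 2
  rw [smul_one_eq_diagonal]
  ext i j
  rcases eq_or_ne i j with rfl | hij
  · push_cast [Matrix.diagonal_apply_eq, Matrix.sub_apply, Matrix.add_apply, Function.comp]
    abel
  · simp [Matrix.diagonal_apply_ne _ hij]

private lemma lw_weyl_shift {M N : Matrix (Fin n) (Fin n) ℂ}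
    (hM : M.IsHermitian) (hN : N.IsHermitian)
    (t : ℝ) (hpsd : (N - M - (t : ℂ) • 1).PosSemidef)
    {μ ν : Fin n → ℝ} (hμ : IsEigSeq M hM μ) (hν : IsEigSeq N hN ν) (i : Fin n) :
    μ i + t ≤ ν i := by
  obtain ⟨hμa, σ, hσ⟩ := hμ
  obtain ⟨hνa, τ, hτ⟩ := hν
  set SV : Finset (Fin n) := (Finset.Iic i).image σ with hSV
  set SW : Finset (Fin n) := (Finset.Ici i).image τ with hSW
  set V := Submodule.span ℂ (hM.eigenvectorBasis '' (SV : Set (Fin n))) with hV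
  set W := Submodule.span ℂ (hN.eigenvectorBasis '' (SW : Set (Fin n))) with hW
  have hdim : n < Module.finrank ℂ V + Module.finrank ℂ W := by
    rw [hV, hW, lw_finrank_span_onb, lw_finrank_span_onb, hSV, hSW,
      Finset.card_image_of_injective _ σ.injective,
      Finset.card_image_of_injective _ τ.injective, Fin.card_Iic, Fin.card_Ici]
    have := i.isLt; omega
  obtain ⟨x, hx0, hxV, hxW⟩ := lw_exists_ne_zero_mem_inf hdim
  have hlow : μ i * ‖x‖ ^ 2
      ≤ RCLike.re (star (WithLp.equiv 2 _ x) ⬝ᵥ (M *ᵥ WithLp.equiv 2 _ x)) := by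
    refine lw_rayleigh_ge hM SV (μ i) ?_ x hxV
    rintro j hj
    rw [hSV] at hj
    obtain ⟨k, hk, rfl⟩ := Finset.mem_image.mp hj
    rw [← hσ k]
    exact hμa (Finset.mem_Iic.mp hk)
  have hup : RCLike.re (star (WithLp.equiv 2 _ x) ⬝ᵥ (N *ᵥ WithLp.equiv 2 _ x))
      ≤ ν i * ‖x‖ ^ 2 := by
    refine lw_rayleigh_le hN SW (ν i) ?_ x hxW
    rintro j hj
    rw [hSW] at hj
    obtain ⟨k, hk, rfl⟩ := Finset.mem_image.mp hj
    rw [← hτ k]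
    exact hνa (Finset.mem_Ici.mp hk)
  have hmid : RCLike.re (star (WithLp.equiv 2 _ x) ⬝ᵥ (M *ᵥ WithLp.equiv 2 _ x)) + t * ‖x‖ ^ 2
      ≤ RCLike.re (star (WithLp.equiv 2 _ x) ⬝ᵥ (N *ᵥ WithLp.equiv 2 _ x)) := by
    have h0 := hpsd.re_dotProduct_nonneg (WithLp.equiv 2 _ x)
    have hx2 : RCLike.re (star (WithLp.equiv 2 _ x) ⬝ᵥ ((t:ℂ) • WithLp.equiv 2 _ x))
        = t * ‖x‖ ^ 2 := by
      rw [dotProduct_smul]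
      rw [show star (WithLp.equiv 2 _ x) ⬝ᵥ (WithLp.equiv 2 _ x) = ⟪x, x⟫_ℂ from
        (dotProduct_comm _ _).trans (EuclideanSpace.inner_eq_star_dotProduct x x).symm]
      rw [smul_eq_mul, inner_self_eq_norm_sq_to_K]
      rw [show (RCLike.ofReal (K := ℂ) ‖x‖) = ((‖x‖ : ℝ) : ℂ) from rfl]
      norm_cast
    have hexp : (N - M - (t:ℂ) • 1) *ᵥ (WithLp.equiv 2 _ x)
        = N *ᵥ (WithLp.equiv 2 _ x) - M *ᵥ (WithLp.equiv 2 _ x)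
          - (t:ℂ) • (WithLp.equiv 2 _ x) := by
      rw [Matrix.sub_mulVec, Matrix.sub_mulVec, Matrix.smul_mulVec, Matrix.one_mulVec]
    rw [hexp, dotProduct_sub, dotProduct_sub, map_sub, map_sub, hx2] at h0
    linarith
  have hn2 : (0:ℝ) < ‖x‖ ^ 2 := by
    have := norm_pos_iff.mpr hx0
    positivity
  exact (mul_le_mul_iff_of_pos_right hn2).mp (by nlinarith : (μ i + t) * ‖x‖ ^ 2 ≤ ν i * ‖x‖ ^ 2)

end LWAux

open scoped InnerProductSpace ComplexOrder in
/-- Lidskii–Wielandt inequalities: for Hermitian `A`, `B` and `C = A + B`, for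
every subset `I` of `{1,…,n}` of cardinality `r < n`,
`∑_{i∈I} γ_i ≤ ∑_{i∈I} α_i + ∑_{i=1}^r β_i`. -/
theorem lidskii_wielandt {n : ℕ} (A B : Matrix (Fin n) (Fin n) ℂ)
    (hA : A.IsHermitian) (hB : B.IsHermitian) (hC : (A + B).IsHermitian)
    (α β γ : Fin n → ℝ)
    (hα : IsEigSeq A hA α) (hβ : IsEigSeq B hB β) (hγ : IsEigSeq (A + B) hC γ) :
    ∀ (r : ℕ), r < n → ∀ I : Finset (Fin n), I.card = r →
      ∑ i ∈ I, γ i ≤ ∑ i ∈ I, α i +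
        ∑ i ∈ Finset.univ.filter (fun i : Fin n => i.val < r), β i := by
  classical
  intro r hr I hI
  set t : ℝ := β ⟨r, hr⟩ with ht
  set U : Matrix (Fin n) (Fin n) ℂ :=
    (↑(Matrix.IsHermitian.eigenvectorUnitary hB) : Matrix (Fin n) (Fin n) ℂ) with hUdef
  set d : Fin n → ℝ := fun k => max (hB.eigenvalues k - t) 0 with hd
  set Bp : Matrix (Fin n) (Fin n) ℂ := U * diagonal (fun k => (d k : ℂ)) * star U with hBp
  have hBp_psd : Bp.PosSemidef := lw_conj_unitary_psd d (fun i => le_max_right _ _)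
  have hkey : Bp + (t : ℂ) • 1 - B
      = U * diagonal (fun k => ((d k - (hB.eigenvalues k - t) : ℝ) : ℂ)) * star U :=
    lw_pos_part_eq hB t
  have hD_psd : (Bp + (t:ℂ) • 1 - B).PosSemidef := by
    rw [hkey]
    exact lw_conj_unitary_psd _ (fun i => sub_nonneg.mpr (le_max_left _ _))
  set N : Matrix (Fin n) (Fin n) ℂ := A + Bp + (t : ℂ) • 1 with hNdef
  have hsm : ((t:ℂ) • (1 : Matrix (Fin n) (Fin n) ℂ)).IsHermitian := by
    rw [Matrix.IsHermitian, Matrix.conjTranspose_smul]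
    simp [Complex.star_def, Complex.conj_ofReal]
  have hNh : N.IsHermitian := (hA.add hBp_psd.isHermitian).add hsm
  obtain ⟨ν, hν⟩ := lw_exists_isEigSeq N hNh
  have step1 : ∀ i, γ i ≤ ν i := by
    intro i
    have hps : (N - (A + B) - (((0:ℝ)):ℂ) • 1).PosSemidef := by
      have hEq : N - (A + B) - (((0:ℝ)):ℂ) • 1 = Bp + (t:ℂ) • 1 - B := by
        rw [hNdef, Complex.ofReal_zero, zero_smul, sub_zero]
        abel
      rw [hEq]; exact hD_psd
    have := lw_weyl_shift hC hNh 0 hps hγ hν i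
    simpa using this
  have step2 : ∀ i, α i + t ≤ ν i := by
    intro i
    refine lw_weyl_shift hA hNh t ?_ hα hν i
    have hEq : N - A - (t:ℂ) • 1 = Bp := by rw [hNdef]; abel
    rw [hEq]; exact hBp_psd
  -- trace identities
  have htrBp : Bp.trace = (↑(∑ k, d k) : ℂ) := by
    rw [hBp, Matrix.trace_mul_cycle, (Matrix.mem_unitaryGroup_iff').mp
      (Matrix.IsHermitian.eigenvectorUnitary hB).2, one_mul, trace_diagonal]
    push_cast
    rfl
  have hsumν : ∑ i, ν i = ∑ i, hNh.eigenvalues i := by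
    obtain ⟨_, τ, hτ⟩ := hν
    rw [Finset.sum_congr rfl fun i _ => hτ i]
    exact Equiv.sum_comp τ hNh.eigenvalues
  have hsumα : ∑ i, α i = ∑ i, hA.eigenvalues i := by
    obtain ⟨_, σa, hσa⟩ := hα
    rw [Finset.sum_congr rfl fun i _ => hσa i]
    exact Equiv.sum_comp σa hA.eigenvalues
  have htr : ∑ i, ν i = ∑ i, α i + ((∑ k, d k) + t * n) := by
    have hcx : (↑(∑ i, ν i) : ℂ) = ↑(∑ i, α i) + (↑(∑ k, d k) + ↑t * (n:ℂ)) := by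
      rw [hsumν, hsumα, lw_sum_eig_eq_trace hNh, lw_sum_eig_eq_trace hA, hNdef,
        Matrix.trace_add, Matrix.trace_add, htrBp, Matrix.trace_smul, Matrix.trace_one,
        Fintype.card_fin, smul_eq_mul]
      push_cast
      ring
    exact_mod_cast hcx
  -- identify ∑ d with the filtered β-sum
  have hfil : ∑ k, d k = ∑ k ∈ Finset.univ.filter (fun k : Fin n => k.val < r), (β k - t) := by
    obtain ⟨hβa, ρ, hρ⟩ := hβ
    have h1 : ∑ k, d k = ∑ k, max (β k - t) 0 := by
      rw [show (∑ k, max (β k - t) 0) = ∑ k, max (hB.eigenvalues (ρ k) - t) 0 from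
        Finset.sum_congr rfl fun k _ => by rw [hρ k]]
      exact (Equiv.sum_comp ρ (fun j => max (hB.eigenvalues j - t) 0)).symm
    rw [h1, ← Finset.sum_filter_add_sum_filter_not Finset.univ (fun k : Fin n => k.val < r)]
    have h2 : ∑ k ∈ Finset.univ.filter (fun k : Fin n => ¬ k.val < r), max (β k - t) 0 = 0 := by
      refine Finset.sum_eq_zero fun k hk => ?_
      have hk' : r ≤ k.val := by simpa using (Finset.mem_filter.mp hk).2
      have : β k ≤ t := by
        rw [ht]
        exact hβa (by simpa [Fin.le_def] using hk')
      exact max_eq_right (by linarith : β k - t ≤ 0)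
    have h3 : ∑ k ∈ Finset.univ.filter (fun k : Fin n => k.val < r), max (β k - t) 0
        = ∑ k ∈ Finset.univ.filter (fun k : Fin n => k.val < r), (β k - t) := by
      refine Finset.sum_congr rfl fun k hk => ?_
      have hk' : k.val < r := by simpa using (Finset.mem_filter.mp hk).2
      have : t ≤ β k := by
        rw [ht]
        exact hβa (by simpa [Fin.le_def] using (Nat.le_of_lt hk'))
      exact max_eq_left (by linarith)
    rw [h2, h3, add_zero]
  have hcard : (Finset.univ.filter (fun k : Fin n => k.val < r)).card = r := by
    have : Finset.univ.filter (fun k : Fin n => k.val < r) = Finset.Iio (⟨r, hr⟩ : Fin n) := by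
      ext k
      simp [Fin.lt_def]
    rw [this, Fin.card_Iio]
  -- final arithmetic
  have E1 : ∑ i ∈ I, γ i ≤ ∑ i ∈ I, ν i := Finset.sum_le_sum fun i _ => step1 i
  have E2 : ∑ i ∈ I, (ν i - α i - t) ≤ ∑ i ∈ Finset.univ, (ν i - α i - t) := by
    refine Finset.sum_le_sum_of_subset_of_nonneg (Finset.subset_univ I) fun i _ _ => ?_
    have := step2 i; linarith
  have E3 : ∑ i ∈ I, (ν i - α i - t) = ∑ i ∈ I, ν i - ∑ i ∈ I, α i - t * r := by
    rw [Finset.sum_sub_distrib, Finset.sum_sub_distrib, Finset.sum_const, hI]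
    simp [nsmul_eq_mul, mul_comm]
  have E4 : ∑ i ∈ Finset.univ, (ν i - α i - t) = ∑ k, d k := by
    rw [Finset.sum_sub_distrib, Finset.sum_sub_distrib, Finset.sum_const, Finset.card_univ,
      Fintype.card_fin]
    rw [htr]
    simp [nsmul_eq_mul, mul_comm]
  have E5 : ∑ k ∈ Finset.univ.filter (fun k : Fin n => k.val < r), (β k - t)
      = (∑ k ∈ Finset.univ.filter (fun k : Fin n => k.val < r), β k) - t * r := by
    rw [Finset.sum_sub_distrib, Finset.sum_const, hcard]
    simp [nsmul_eq_mul, mul_comm]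
  have hfil' := hfil
  rw [E5] at hfil'
  linarith
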